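/- Let n ≥ 2, let s ∈ ℂ with |s| = 1, and set t = s². For 1 ≤ i ≤ n−1 let ρ(σ_i) be the (n−1)×(n−1) reduced Burau matrix: the matrix equal to the identity except in row i, where its entries are ρ(σ_i)_{i,i−1} = 1 (when i ≥ 2), ρ(σ_i)_{i,i} = −t, and ρ(σ_i)_{i,i+1} = t (when i ≤ n−2); this is the matrix of the restriction of the unreduced Burau matrix B_i(t) to the invariant subspace span{v_1,…,v_{n−1}} in the basis (v_1,…,v_{n−1}), where v_j = −t·e_j + e_{j+1}. Let P = diag(1, s, s², …, s^{n−2}) and let J be the (n−1)×(n−1) tridiagonal Hermitian matrix with diagonal entries s + s⁻¹ and entries −1 immediately above and below the diagonal. Set ρ_s(σ_i) = P·ρ(σ_i)·P⁻¹. Then for every 1 ≤ i ≤ n−1, (ρ_s(σ_i))† · J · ρ_s(σ_i) = J, where † denotes conjugate transpose; that is, the conjugated reduced Burau representation is unitary with respect to the Hermitian form J. -/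

import Mathlib

set_option maxHeartbeats 4000000

open Matrix

/-- The reduced Burau matrix of the braid generator acting on strands `i, i+1`
(0-indexed `i`, so this is the generator `σ_{i+1}` in 1-based labelling): the
`(n-1) × (n-1)` matrix equal to the identity except in row `i`, where the entries are
`1` in column `i-1`, `-t` in column `i`, and `t` in column `i+1`. -/
noncomputable def redBurau (n : ℕ) (t : ℂ) (i : ℕ) :
    Matrix (Fin (n - 1)) (Fin (n - 1)) ℂ :=
  fun r c =>
    if (r : ℕ) = i then
      if (c : ℕ) + 1 = i then 1
      else if (c : ℕ) = i then -t
      else if (c : ℕ) = i + 1 then t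
      else 0
    else if r = c then 1 else 0

/-- The diagonal matrix `P = diag(1, s, s², …, s^{n-2})`. -/
noncomputable def Pmat (n : ℕ) (s : ℂ) : Matrix (Fin (n - 1)) (Fin (n - 1)) ℂ :=
  Matrix.diagonal fun j => s ^ (j : ℕ)

/-- The tridiagonal Hermitian matrix `J` with diagonal entries `s + s⁻¹` and
entries `-1` immediately above and below the diagonal. -/
noncomputable def Jmat (n : ℕ) (s : ℂ) : Matrix (Fin (n - 1)) (Fin (n - 1)) ℂ :=
  fun r c =>
    if (r : ℕ) = (c : ℕ) then s + s⁻¹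
    else if (r : ℕ) + 1 = (c : ℕ) ∨ (c : ℕ) + 1 = (r : ℕ) then -1
    else 0

/- ---------- auxiliary definitions ---------- -/

noncomputable def wVec (n : ℕ) (s : ℂ) (i : ℕ) : Fin (n - 1) → ℂ :=
  fun c => if (c : ℕ) + 1 = i then 1 else if (c : ℕ) = i then -(s ^ 2) - 1
    else if (c : ℕ) = i + 1 then s ^ 2 else 0

noncomputable def wbVec (n : ℕ) (s : ℂ) (i : ℕ) : Fin (n - 1) → ℂ :=
  fun r => if (r : ℕ) + 1 = i then 1 else if (r : ℕ) = i then -((s⁻¹) ^ 2) - 1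
    else if (r : ℕ) = i + 1 then (s⁻¹) ^ 2 else 0

noncomputable def uVec (n : ℕ) (i : ℕ) : Fin (n - 1) → ℂ :=
  fun r => if (r : ℕ) = i then 1 else 0

noncomputable def Emat (n : ℕ) (s : ℂ) (i : ℕ) : Matrix (Fin (n - 1)) (Fin (n - 1)) ℂ :=
  fun r c => uVec n i r * wVec n s i c

noncomputable def Fmat (n : ℕ) (s : ℂ) (i : ℕ) : Matrix (Fin (n - 1)) (Fin (n - 1)) ℂ :=
  fun r c => wbVec n s i r * uVec n i c

noncomputable def Kmat (n : ℕ) (s : ℂ) : Matrix (Fin (n - 1)) (Fin (n - 1)) ℂ :=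
  fun r c => (s⁻¹) ^ (r : ℕ) * Jmat n s r c * s ^ (c : ℕ)

/- ---------- scalar key identity ---------- -/

lemma orif (p q : Prop) [Decidable p] [Decidable q] (z : ℂ) :
    (if p ∨ q then z else 0) = if p then z else if q then z else 0 := by
  split_ifs <;> tauto

lemma burau_key (s : ℂ) (hs : s ≠ 0) (i A C : ℕ) :
    ((s⁻¹) ^ A * (if A = i then s + s⁻¹ else if A + 1 = i ∨ i + 1 = A then -1 else 0) * s ^ i) *
        (if C + 1 = i then 1 else if C = i then -(s ^ 2) - 1 else if C = i + 1 then s ^ 2 else 0)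
      + (if A + 1 = i then 1 else if A = i then -((s⁻¹) ^ 2) - 1 else if A = i + 1 then (s⁻¹) ^ 2 else 0) *
        ((s⁻¹) ^ i * (if i = C then s + s⁻¹ else if i + 1 = C ∨ C + 1 = i then -1 else 0) * s ^ C)
      + (if A + 1 = i then 1 else if A = i then -((s⁻¹) ^ 2) - 1 else if A = i + 1 then (s⁻¹) ^ 2 else 0) *
        ((s⁻¹) ^ i * (s + s⁻¹) * s ^ i) *
        (if C + 1 = i then 1 else if C = i then -(s ^ 2) - 1 else if C = i + 1 then s ^ 2 else 0) = 0 := by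
  rw [orif, orif]
  split_ifs <;>
    first
      | omega
      | ((try (have hCA : C = A := by omega)); (try subst hCA); subst_vars;
         (try field_simp [inv_pow]); (try ring_nf);
         (try simp only [inv_pow]); (try field_simp);
         (try ring_nf))

/- ---------- matrix lemmas ---------- -/

lemma redBurau_eq (n : ℕ) (s : ℂ) (i : ℕ) :
    redBurau n (s ^ 2) i = 1 + Emat n s i := by
  ext r c
  simp only [redBurau, Emat, uVec, wVec, Matrix.add_apply, Matrix.one_apply, Fin.ext_iff]
  split_ifs <;> first | omega | norm_num | ring

lemma redBurau_conjTranspose (n : ℕ) (s : ℂ) (i : ℕ) (hconj : star s = s⁻¹) :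
    (redBurau n (s ^ 2) i)ᴴ = 1 + Fmat n s i := by
  rw [redBurau_eq n s i, conjTranspose_add, conjTranspose_one]
  congr 1
  ext r c
  simp only [Matrix.conjTranspose_apply, Emat, Fmat, uVec, wVec, wbVec]
  split_ifs <;> simp [hconj] <;> ring

lemma KE_apply (n : ℕ) (s : ℂ) (i : ℕ) (hi : i < n - 1) (a c : Fin (n - 1)) :
    (Kmat n s * Emat n s i) a c = Kmat n s a ⟨i, hi⟩ * wVec n s i c := by
  rw [Matrix.mul_apply]
  rw [Finset.sum_eq_single (⟨i, hi⟩ : Fin (n - 1))]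
  · simp [Emat, uVec, mul_assoc]
  · intro b _ hb
    have hb' : (b : ℕ) ≠ i := fun h => hb (Fin.ext h)
    simp [Emat, uVec, hb']
  · intro h; exact absurd (Finset.mem_univ _) h

lemma FK_apply (n : ℕ) (s : ℂ) (i : ℕ) (hi : i < n - 1) (a c : Fin (n - 1)) :
    (Fmat n s i * Kmat n s) a c = wbVec n s i a * Kmat n s ⟨i, hi⟩ c := by
  rw [Matrix.mul_apply]
  rw [Finset.sum_eq_single (⟨i, hi⟩ : Fin (n - 1))]
  · simp [Fmat, uVec]
  · intro b _ hb
    have hb' : (b : ℕ) ≠ i := fun h => hb (Fin.ext h)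
    simp [Fmat, uVec, hb']
  · intro h; exact absurd (Finset.mem_univ _) h

lemma FKE_apply (n : ℕ) (s : ℂ) (i : ℕ) (hi : i < n - 1) (a c : Fin (n - 1)) :
    (Fmat n s i * (Kmat n s * Emat n s i)) a c
      = wbVec n s i a * (Kmat n s ⟨i, hi⟩ ⟨i, hi⟩ * wVec n s i c) := by
  rw [Matrix.mul_apply]
  rw [Finset.sum_eq_single (⟨i, hi⟩ : Fin (n - 1))]
  · rw [KE_apply n s i hi]; simp [Fmat, uVec]
  · intro b _ hb
    have hb' : (b : ℕ) ≠ i := fun h => hb (Fin.ext h)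
    simp [Fmat, uVec, hb']
  · intro h; exact absurd (Finset.mem_univ _) h

lemma burau_core (n : ℕ) (s : ℂ) (hs0 : s ≠ 0) (hconj : star s = s⁻¹)
    (i : ℕ) (hi : i < n - 1) :
    (redBurau n (s ^ 2) i)ᴴ * Kmat n s * redBurau n (s ^ 2) i = Kmat n s := by
  rw [redBurau_conjTranspose n s i hconj, redBurau_eq n s i]
  have expand : (1 + Fmat n s i) * Kmat n s * (1 + Emat n s i)
      = Kmat n s + (Fmat n s i * Kmat n s
          + (Kmat n s * Emat n s i + Fmat n s i * (Kmat n s * Emat n s i))) := by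
    noncomm_ring
  rw [expand]
  have hZ : Fmat n s i * Kmat n s
      + (Kmat n s * Emat n s i + Fmat n s i * (Kmat n s * Emat n s i)) = 0 := by
    ext a c
    simp only [Matrix.add_apply, Matrix.zero_apply]
    rw [FK_apply n s i hi, KE_apply n s i hi, FKE_apply n s i hi]
    have hkey := burau_key s hs0 i (a : ℕ) (c : ℕ)
    simp only [Kmat, Jmat, wVec, wbVec]
    simp only [Fin.val_mk, eq_self_iff_true, if_true] at *
    linear_combination hkey
  rw [hZ, add_zero]

/-- For `|s| = 1` and `t = s²`, the conjugated reduced Burau matrices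
`ρ_s(σ_i) = P · ρ(σ_i) · P⁻¹` are unitary with respect to the Hermitian form `J`:
`ρ_s(σ_i)† · J · ρ_s(σ_i) = J`. -/
theorem reduced_burau_J_unitary (n : ℕ) (hn : 2 ≤ n) (s : ℂ) (hs : ‖s‖ = 1) :
    ∀ i : ℕ, i < n - 1 →
      (Pmat n s * redBurau n (s ^ 2) i * (Pmat n s)⁻¹)ᴴ * Jmat n s *
        (Pmat n s * redBurau n (s ^ 2) i * (Pmat n s)⁻¹) = Jmat n s := by
  intro i hi
  have hs0 : s ≠ 0 := by
    intro h; rw [h] at hs; simp at hs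
  have hconj : star s = s⁻¹ := by
    have h1 : s * star s = 1 := by
      have := Complex.mul_conj s
      rw [Complex.normSq_eq_norm_sq, hs] at this
      simpa using this
    exact eq_inv_of_mul_eq_one_right h1
  have hPH : (Pmat n s)ᴴ = Matrix.diagonal (fun j : Fin (n - 1) => (s⁻¹) ^ (j : ℕ)) := by
    have hst : (star fun j : Fin (n - 1) => s ^ (j : ℕ))
        = fun j : Fin (n - 1) => (s⁻¹) ^ (j : ℕ) := by
      funext j
      simp [Pi.star_apply, star_pow, hconj]
    rw [Pmat, Matrix.diagonal_conjTranspose, hst]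
  have hP1 : Pmat n s * (Pmat n s)ᴴ = 1 := by
    rw [hPH, Pmat, Matrix.diagonal_mul_diagonal]
    convert Matrix.diagonal_one with j
    rw [← mul_pow, mul_inv_cancel₀ hs0, one_pow]
  have hPinv : (Pmat n s)⁻¹ = (Pmat n s)ᴴ := Matrix.inv_eq_right_inv hP1
  have hK : (Pmat n s)ᴴ * Jmat n s * Pmat n s = Kmat n s := by
    rw [hPH, Pmat]
    ext r c
    rw [Matrix.mul_diagonal, Matrix.diagonal_mul]
    rfl
  have hBmain : (redBurau n (s ^ 2) i)ᴴ * ((Pmat n s)ᴴ * Jmat n s * Pmat n s) *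
      redBurau n (s ^ 2) i = (Pmat n s)ᴴ * Jmat n s * Pmat n s := by
    rw [hK]; exact burau_core n s hs0 hconj i hi
  rw [hPinv]
  calc (Pmat n s * redBurau n (s ^ 2) i * (Pmat n s)ᴴ)ᴴ * Jmat n s *
        (Pmat n s * redBurau n (s ^ 2) i * (Pmat n s)ᴴ)
      = Pmat n s * ((redBurau n (s ^ 2) i)ᴴ * ((Pmat n s)ᴴ * Jmat n s * Pmat n s) *
          redBurau n (s ^ 2) i) * (Pmat n s)ᴴ := by
        simp only [Matrix.conjTranspose_mul, Matrix.conjTranspose_conjTranspose,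
          Matrix.mul_assoc]
    _ = Pmat n s * ((Pmat n s)ᴴ * Jmat n s * Pmat n s) * (Pmat n s)ᴴ := by rw [hBmain]
    _ = Jmat n s := by
        simp only [Matrix.mul_assoc]
        rw [hP1, Matrix.mul_one, ← Matrix.mul_assoc, hP1, Matrix.one_mul]
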